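/- (Theorem 4.1(b): D-NVCG equilibrium bid for a broker with φ^1 ≤ c^V) Let A > 0, ω > 0, q ≥ 2, W > 0, ℓ ≥ 0, α, φ₀, κ ∈ ℝ, and H : ℝ → ℝ differentiable at φ₀ with derivative h > 0. Suppose the commission function is the affine D-NVCG fee c(φ) = κ + ω·(ℓ/W + (q−1))·φ, that c(φ₀) = φ₀ (pivotal pricing), and that the payoff π(φ) = A·(c(φ) − α)·H(φ) has derivative 0 at φ₀. Then φ₀ = α − ω·(ℓ/W + (q−1))·H(φ₀)/h. -/

import Mathlib

/-- Theorem 4.1(b): D-NVCG equilibrium bid for a broker with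
`φ¹ ≤ cV`. Let `A > 0` be the trading value, `ω > 0` the package weight,
`q ≥ 2` the number of packages, `ℓ ≥ 0` the number of first-round overbidders,
`W > 0` the total weight of the non-overbidders, `α` the valuation, and `H`
the winning probability, differentiable at `φ₀` with derivative `h > 0`.
Suppose the commission is the affine D-NVCG fee
`c φ = κ + ω * (ℓ/W + (q-1)) * φ`, that `c φ₀ = φ₀` (pivotal pricing), and
that the payoff `π φ = A * (c φ - α) * H φ` has derivative `0` at `φ₀`.
Then `φ₀ = α - ω * (ℓ/W + (q-1)) * H φ₀ / h`. -/
theorem dnvcg_equilibrium_bid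
    (A ω W α φ₀ κ h : ℝ) (q ℓ : ℕ) (hA : 0 < A) (hω : 0 < ω) (hq : 2 ≤ q)
    (hW : 0 < W)
    (H : ℝ → ℝ) (hH : HasDerivAt H h φ₀) (hh : 0 < h)
    (c : ℝ → ℝ)
    (hc : ∀ φ : ℝ, c φ = κ + ω * ((ℓ : ℝ) / W + ((q : ℝ) - 1)) * φ)
    (hpiv : c φ₀ = φ₀)
    (hπ : HasDerivAt (fun φ => A * (c φ - α) * H φ) 0 φ₀) :
    φ₀ = α - ω * ((ℓ : ℝ) / W + ((q : ℝ) - 1)) * H φ₀ / h := by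
  set s : ℝ := ω * ((ℓ : ℝ) / W + ((q : ℝ) - 1)) with hs
  have hcfun : c = fun φ => κ + s * φ := funext hc
  have hc' : HasDerivAt c s φ₀ := by
    rw [hcfun]
    simpa using ((hasDerivAt_id φ₀).const_mul s).const_add κ
  have hf : HasDerivAt (fun φ => A * (c φ - α) * H φ)
      (A * s * H φ₀ + A * (c φ₀ - α) * h) φ₀ := by
    have := (((hc'.sub_const α).const_mul A).mul hH)
    exact this
  have key : A * s * H φ₀ + A * (c φ₀ - α) * h = 0 := hf.unique hπ
  rw [hpiv] at key
  have : s * H φ₀ + (φ₀ - α) * h = 0 := by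
    have hA' := hA.ne'
    nlinarith [key]
  field_simp
  nlinarith [this]
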